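/- If S, E, I, C : [0,∞) → ℝ are nonnegative differentiable solutions of S' = -σIS - ωSC, E' = σIS + ωSC - λE, I' = λ₁E - γI, C' = γ₁I - μC with λ₂ = λ - λ₁ > 0, γ₂ = γ - γ₁ > 0, μ > 0, then ∫₀^∞ (E(s) + I(s) + C(s)) ds < ∞. -/

import Mathlib

open Set Filter MeasureTheory

theorem stmt_2 (σ ω μ lam lam1 lam2 γ γ₁ γ₂ : ℝ)
    (hσ : 0 < σ) (hω : 0 < ω) (hμ : 0 < μ) (hlam1 : 0 < lam1) (hlam2 : 0 < lam2)
    (hγ₁ : 0 < γ₁) (hγ₂ : 0 < γ₂) (hlam : lam = lam1 + lam2) (hγ : γ = γ₁ + γ₂)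
    (S E I C : ℝ → ℝ)
    (hS : ∀ t ≥ (0:ℝ), HasDerivAt S (-σ * I t * S t - ω * S t * C t) t)
    (hE : ∀ t ≥ (0:ℝ), HasDerivAt E (σ * I t * S t + ω * S t * C t - lam * E t) t)
    (hI : ∀ t ≥ (0:ℝ), HasDerivAt I (lam1 * E t - γ * I t) t)
    (hC : ∀ t ≥ (0:ℝ), HasDerivAt C (γ₁ * I t - μ * C t) t)
    (hnn : ∀ t ≥ (0:ℝ), 0 ≤ S t ∧ 0 ≤ E t ∧ 0 ≤ I t ∧ 0 ≤ C t) :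
    IntegrableOn (fun s => E s + I s + C s) (Ioi 0) := by
  have hEcont : ContinuousOn E (Ici 0) := fun t ht => ((hE t ht).continuousAt).continuousWithinAt
  have hIcont : ContinuousOn I (Ici 0) := fun t ht => ((hI t ht).continuousAt).continuousWithinAt
  have hCcont : ContinuousOn C (Ici 0) := fun t ht => ((hC t ht).continuousAt).continuousWithinAt
  set c : ℝ := min lam2 (min γ₂ μ) with hcdef
  have hcpos : 0 < c := lt_min hlam2 (lt_min hγ₂ hμ)
  set f : ℝ → ℝ := fun s => E s + I s + C s with hfdef
  set g : ℝ → ℝ := fun s => lam2 * E s + γ₂ * I s + μ * C s with hgdef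
  set W : ℝ → ℝ := fun s => S s + E s + I s + C s with hWdef
  have hfcont : ContinuousOn f (Ici 0) := (hEcont.add hIcont).add hCcont
  have hgcont : ContinuousOn g (Ici 0) :=
    ((continuousOn_const.mul hEcont).add (continuousOn_const.mul hIcont)).add
      (continuousOn_const.mul hCcont)
  have hW' : ∀ t ∈ Ici (0:ℝ), HasDerivAt W (-g t) t := by
    intro t ht
    have h := (((hS t ht).add (hE t ht)).add (hI t ht)).add (hC t ht)
    refine h.congr_deriv ?_
    simp only [hgdef]
    rw [hlam, hγ]; ring
  have hWnn : ∀ t ≥ (0:ℝ), 0 ≤ W t := by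
    intro t ht
    obtain ⟨h1, h2, h3, h4⟩ := hnn t ht
    simp only [hWdef]; linarith
  refine MeasureTheory.integrableOn_Ioi_of_intervalIntegral_norm_bounded
    (b := fun n : ℕ => (n : ℝ)) (W 0 / c) 0 ?_ tendsto_natCast_atTop_atTop ?_
  · intro n
    exact ((hfcont.mono (Icc_subset_Ici_self)).integrableOn_Icc).mono_set Ioc_subset_Icc_self
  · filter_upwards with n
    have hn : (0:ℝ) ≤ (n:ℝ) := Nat.cast_nonneg n
    have hsub : Icc (0:ℝ) (n:ℝ) ⊆ Ici 0 := Icc_subset_Ici_self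
    have hintf : IntervalIntegrable f volume 0 (n:ℝ) :=
      (hfcont.mono hsub).intervalIntegrable_of_Icc hn
    have hintg : IntervalIntegrable g volume 0 (n:ℝ) :=
      (hgcont.mono hsub).intervalIntegrable_of_Icc hn
    have hnorm : ∫ x in (0:ℝ)..(n:ℝ), ‖f x‖ = ∫ x in (0:ℝ)..(n:ℝ), f x := by
      refine intervalIntegral.integral_congr ?_
      intro x hx
      rw [uIcc_of_le hn] at hx
      obtain ⟨h1, h2, h3, h4⟩ := hnn x hx.1
      simp only [hfdef, Real.norm_eq_abs]
      exact abs_of_nonneg (by linarith)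
    rw [hnorm]
    rw [le_div_iff₀' hcpos]
    have h1 : c * ∫ x in (0:ℝ)..(n:ℝ), f x = ∫ x in (0:ℝ)..(n:ℝ), c * f x :=
      (intervalIntegral.integral_const_mul c f).symm
    rw [h1]
    have h2 : (∫ x in (0:ℝ)..(n:ℝ), c * f x) ≤ ∫ x in (0:ℝ)..(n:ℝ), g x := by
      refine intervalIntegral.integral_mono_on hn (hintf.const_mul c) hintg ?_
      intro x hx
      obtain ⟨h1', h2', h3', h4'⟩ := hnn x hx.1
      have hc1 : c ≤ lam2 := min_le_left _ _
      have hc2 : c ≤ γ₂ := le_trans (min_le_right _ _) (min_le_left _ _)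
      have hc3 : c ≤ μ := le_trans (min_le_right _ _) (min_le_right _ _)
      simp only [hfdef, hgdef]
      nlinarith [mul_le_mul_of_nonneg_right hc1 h2', mul_le_mul_of_nonneg_right hc2 h3',
        mul_le_mul_of_nonneg_right hc3 h4']
    have h3 : (∫ x in (0:ℝ)..(n:ℝ), g x) = W 0 - W (n:ℝ) := by
      have hftc := intervalIntegral.integral_eq_sub_of_hasDerivAt
        (f := W) (f' := fun t => -g t)
        (fun t ht => hW' t (by rw [uIcc_of_le hn] at ht; exact ht.1)) (hintg.neg)
      have : (∫ x in (0:ℝ)..(n:ℝ), -g x) = W (n:ℝ) - W 0 := hftc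
      rw [intervalIntegral.integral_neg] at this
      linarith
    have h4 : W 0 - W (n:ℝ) ≤ W 0 := by have := hWnn (n:ℝ) hn; linarith
    linarith
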